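/- Correctness of the per-type selection when types share due date and first-machine processing time: consider a two-machine JIT flow-shop instance, and call two jobs of the same type if they have both the same due date and the same processing time on M_1. Let ω = {𝒥_1,…,𝒥_{k'}} be a collection of types with pairwise distinct due dates d_1 < d_2 < … < d_{k'} (set d_0 = 0), where all jobs of type i have due date d_i and first-machine processing time p^(1)_i. For i ∈ {1,…,k'} define the nominee set N(i) = {J ∈ 𝒥_i : max(Σ_{l=1}^{i} p^(1)_l, d_{i−1}) + p^(2)_J ≤ d_i}. Then: (a) there exists a feasible set E containing exactly one job of each type of ω if and only if N(i) ≠ ∅ for every i ∈ {1,…,k'}; and (b) in that case, the maximum weight Σ_{J∈E} w_J over all such feasible sets E equals Σ_{i=1}^{k'} max{w_J : J ∈ N(i)}. -/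

import Mathlib

open Finset

/-- A just-in-time flow-shop instance on `m` machines with jobs of type `J`:
`p i j` is the (positive integer) processing time of job `j` on machine `i`,
`d j` its positive integer due date and `w j` its positive integer weight. -/
structure JITInstance (m : ℕ) (J : Type) where
  p : Fin m → J → ℕ
  d : J → ℕ
  w : J → ℕ
  p_pos : ∀ i j, 0 < p i j
  d_pos : ∀ j, 0 < d j
  w_pos : ∀ j, 0 < w j

/-- `S` is a JIT schedule of the job set `E`: on every machine the processing
intervals `(S i j, S i j + p i j]` of distinct jobs of `E` are pairwise disjoint,
each job's operation on machine `i+1` starts no earlier than its completion on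
machine `i`, and every job of `E` completes on the last machine exactly at its
due date.  (Start times are nonnegative automatically, being naturals.) -/
def IsJITSchedule {m : ℕ} {J : Type} (I : JITInstance m J)
    (E : Finset J) (S : Fin m → J → ℕ) : Prop :=
  (∀ i : Fin m, ∀ j ∈ E, ∀ j' ∈ E, j ≠ j' →
      S i j + I.p i j ≤ S i j' ∨ S i j' + I.p i j' ≤ S i j) ∧
  (∀ j ∈ E, ∀ i i' : Fin m, i'.val = i.val + 1 →
      S i j + I.p i j ≤ S i' j) ∧
  (∀ j ∈ E, ∀ i : Fin m, i.val = m - 1 →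
      S i j + I.p i j = I.d j)

/-- A job set is feasible if it admits a JIT schedule. -/
def Feasible {m : ℕ} {J : Type} (I : JITInstance m J) (E : Finset J) : Prop :=
  ∃ S : Fin m → J → ℕ, IsJITSchedule I E S

/-- The nominee set `N(i)` of type `i`: the jobs of type `i` (all of which have
due date `dd i` and first-machine processing time `pp i`) that can complete in
a JIT mode after the types `0,…,i-1`, i.e. those jobs `a` with
`max (∑_{l ≤ i} pp l) (dd (i-1)) + p² a ≤ dd i` (where `dd (-1) = 0`). -/
def nomineeSet12 {J : Type} [DecidableEq J] {k' : ℕ} (I : JITInstance 2 J)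
    (𝒥 : Fin k' → Finset J) (dd pp : Fin k' → ℕ) (i : Fin k') : Finset J :=
  (𝒥 i).filter (fun a =>
    max (∑ l ∈ Finset.Iic i, pp l)
        (if i.val = 0 then 0
         else dd ⟨i.val - 1, lt_of_le_of_lt (Nat.sub_le _ _) i.isLt⟩)
      + I.p 1 a ≤ dd i)

lemma sum_len_le {α : Type*} [DecidableEq α] (T : Finset α) (s q : α → ℕ) :
    ∀ C : ℕ, (∀ a ∈ T, 0 < q a) →
    (∀ a ∈ T, ∀ b ∈ T, a ≠ b → s a + q a ≤ s b ∨ s b + q b ≤ s a) →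
    (∀ a ∈ T, s a + q a ≤ C) → ∑ a ∈ T, q a ≤ C := by
  induction T using Finset.strongInduction with
  | _ T ih =>
    intro C hq hdisj hC
    rcases T.eq_empty_or_nonempty with rfl | hT
    · simp
    · obtain ⟨m, hm, hmax⟩ := T.exists_max_image s hT
      have hsub : T.erase m ⊂ T := Finset.erase_ssubset hm
      have h1 : ∀ a ∈ T.erase m, s a + q a ≤ s m := by
        intro a ha
        have ham := Finset.ne_of_mem_erase ha
        have haT := Finset.mem_of_mem_erase ha
        rcases hdisj a haT m hm ham with h | h
        · exact h
        · have h2 := hmax a haT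
          have h3 := hq m hm
          omega
      have key := ih _ hsub (s m) (fun a ha => hq a (Finset.mem_of_mem_erase ha))
        (fun a ha b hb hab => hdisj a (Finset.mem_of_mem_erase ha) b (Finset.mem_of_mem_erase hb) hab)
        h1
      have h2 : s m + q m ≤ C := hC m hm
      have h3 : q m + ∑ a ∈ T.erase m, q a = ∑ a ∈ T, q a := Finset.add_sum_erase _ _ hm
      omega

lemma inj_of_types {J : Type} {k' : ℕ} (I : JITInstance 2 J)
    (𝒥 : Fin k' → Finset J) (dd : Fin k' → ℕ)
    (hd : ∀ i, ∀ a ∈ 𝒥 i, I.d a = dd i) (hmono : StrictMono dd)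
    (g : Fin k' → J) (hg : ∀ i, g i ∈ 𝒥 i) : Function.Injective g := by
  intro i j h
  apply hmono.injective
  rw [← hd i _ (hg i), ← hd j _ (hg j), h]

lemma sum_Iic_pp {k' : ℕ} (pp : Fin k' → ℕ) (a : Fin k') :
    ∑ l ∈ Finset.Iic a, pp l = ∑ l ∈ Finset.Iio a, pp l + pp a := by
  have h : Finset.Iic a = insert a (Finset.Iio a) := by
    ext l
    simp [Finset.mem_Iic, Finset.mem_Iio, le_iff_lt_or_eq, or_comm]
  rw [h, Finset.sum_insert (by simp)]
  ring

lemma feasible_forward {J : Type} [DecidableEq J] {k' : ℕ} (I : JITInstance 2 J)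
    (𝒥 : Fin k' → Finset J) (dd pp : Fin k' → ℕ)
    (hd : ∀ i, ∀ a ∈ 𝒥 i, I.d a = dd i)
    (hp : ∀ i, ∀ a ∈ 𝒥 i, I.p 0 a = pp i)
    (hmono : StrictMono dd)
    (g : Fin k' → J) (hg : ∀ i, g i ∈ nomineeSet12 I 𝒥 dd pp i) :
    Feasible I (Finset.univ.image g) := by
  have hgJ : ∀ i, g i ∈ 𝒥 i := fun i => (Finset.mem_filter.mp (hg i)).1
  have hcond : ∀ i, max (∑ l ∈ Finset.Iic i, pp l)
        (if i.val = 0 then 0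
         else dd ⟨i.val - 1, lt_of_le_of_lt (Nat.sub_le _ _) i.isLt⟩)
      + I.p 1 (g i) ≤ dd i := fun i => (Finset.mem_filter.mp (hg i)).2
  have hb1 : ∀ i, ∑ l ∈ Finset.Iic i, pp l + I.p 1 (g i) ≤ dd i := fun i =>
    le_trans (Nat.add_le_add_right (le_max_left _ _) _) (hcond i)
  have hb2 : ∀ i, (if i.val = 0 then 0
         else dd ⟨i.val - 1, lt_of_le_of_lt (Nat.sub_le _ _) i.isLt⟩)
      + I.p 1 (g i) ≤ dd i := fun i =>
    le_trans (Nat.add_le_add_right (le_max_right _ _) _) (hcond i)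
  have hp1le : ∀ i, I.p 1 (g i) ≤ dd i := fun i => by have := hb1 i; omega
  have hinj := inj_of_types I 𝒥 dd hd hmono g hgJ
  classical
  set S : Fin 2 → J → ℕ := fun mach a => if h : ∃ i, g i = a then
      (if mach.val = 0 then ∑ l ∈ Finset.Iio h.choose, pp l
       else dd h.choose - I.p 1 a) else 0 with hS
  have hS0 : ∀ i : Fin k', S 0 (g i) = ∑ l ∈ Finset.Iio i, pp l := by
    intro i
    have h : ∃ j, g j = g i := ⟨i, rfl⟩
    simp only [hS]
    rw [dif_pos h, if_pos (show ((0:Fin 2)).val = 0 from rfl), hinj h.choose_spec]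
  have hS1 : ∀ i : Fin k', S 1 (g i) = dd i - I.p 1 (g i) := by
    intro i
    have h : ∃ j, g j = g i := ⟨i, rfl⟩
    simp only [hS]
    rw [dif_pos h, if_neg (show ¬((1:Fin 2)).val = 0 by decide), hinj h.choose_spec]
  have horder : ∀ a b : Fin k', a < b → S 1 (g a) + I.p 1 (g a) ≤ S 1 (g b) := by
    intro a b hab
    rw [hS1 a, hS1 b]
    have h1 := hp1le a
    have hb0 : b.val ≠ 0 := by rw [Fin.lt_def] at hab; omega
    have h2 := hb2 b
    rw [if_neg hb0] at h2
    have h3 : dd a ≤ dd ⟨b.val - 1, lt_of_le_of_lt (Nat.sub_le _ _) b.isLt⟩ := by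
      apply hmono.monotone
      rw [Fin.le_def]
      rw [Fin.lt_def] at hab
      simp
      omega
    omega
  have hsum : ∀ a b : Fin k', a < b →
      ∑ l ∈ Finset.Iic a, pp l ≤ ∑ l ∈ Finset.Iio b, pp l := by
    intro a b hab
    apply Finset.sum_le_sum_of_subset
    intro l hl
    simp only [Finset.mem_Iic] at hl
    simp only [Finset.mem_Iio]
    exact lt_of_le_of_lt hl hab
  have hkey : ∀ mach : Fin 2, ∀ a b : Fin k', a < b →
      S mach (g a) + I.p mach (g a) ≤ S mach (g b) := by
    intro mach a b hab
    have hm2 := mach.isLt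
    rcases (by omega : mach.val = 0 ∨ mach.val = 1) with h | h
    · have hm : mach = 0 := Fin.ext h
      subst hm
      rw [hS0 a, hS0 b, hp a _ (hgJ a), ← sum_Iic_pp]
      exact hsum a b hab
    · have hm : mach = 1 := Fin.ext h
      subst hm
      exact horder a b hab
  refine ⟨S, ?_, ?_, ?_⟩
  · intro mach j hj j' hj' hne
    simp only [Finset.mem_image, Finset.mem_univ, true_and] at hj hj'
    obtain ⟨a, rfl⟩ := hj
    obtain ⟨b, rfl⟩ := hj'
    rcases lt_trichotomy a b with h | h | h
    · exact Or.inl (hkey mach a b h)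
    · exact absurd (congrArg g h) hne
    · exact Or.inr (hkey mach b a h)
  · intro j hj i i' hii'
    simp only [Finset.mem_image, Finset.mem_univ, true_and] at hj
    obtain ⟨a, rfl⟩ := hj
    have hi2 := i'.isLt
    have hi : i = 0 := Fin.ext (by omega)
    have hi' : i' = 1 := Fin.ext (by omega)
    subst hi hi'
    rw [hS0 a, hS1 a, hp a _ (hgJ a)]
    have h1 := hb1 a
    have h2 := sum_Iic_pp pp a
    omega
  · intro j hj i hi
    simp only [Finset.mem_image, Finset.mem_univ, true_and] at hj
    obtain ⟨a, rfl⟩ := hj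
    have hi1 : i = 1 := Fin.ext (by omega)
    subst hi1
    rw [hS1 a, hd a _ (hgJ a)]
    have := hp1le a
    omega

lemma nominee_of_feasible {J : Type} [DecidableEq J] {k' : ℕ} (I : JITInstance 2 J)
    (𝒥 : Fin k' → Finset J) (dd pp : Fin k' → ℕ)
    (hd : ∀ i, ∀ a ∈ 𝒥 i, I.d a = dd i)
    (hp : ∀ i, ∀ a ∈ 𝒥 i, I.p 0 a = pp i)
    (hmono : StrictMono dd)
    (g : Fin k' → J) (hg : ∀ i, g i ∈ 𝒥 i)
    (hfeas : Feasible I (Finset.univ.image g)) :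
    ∀ i, g i ∈ nomineeSet12 I 𝒥 dd pp i := by
  obtain ⟨S, h1, h2, h3⟩ := hfeas
  have hinj := inj_of_types I 𝒥 dd hd hmono g hg
  have hmem : ∀ i, g i ∈ Finset.univ.image g := fun i =>
    Finset.mem_image_of_mem g (Finset.mem_univ i)
  have hS1 : ∀ i, S 1 (g i) + I.p 1 (g i) = dd i := by
    intro i
    have h := h3 (g i) (hmem i) 1 rfl
    rwa [hd i _ (hg i)] at h
  have hS01 : ∀ i, S 0 (g i) + I.p 0 (g i) ≤ S 1 (g i) :=
    fun i => h2 (g i) (hmem i) 0 1 rfl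
  have claimA : ∀ l i : Fin k', l < i → dd l ≤ S 1 (g i) := by
    intro l i hlt
    have hne : g l ≠ g i := fun h => absurd (hinj h) (ne_of_lt hlt)
    rcases h1 1 (g l) (hmem l) (g i) (hmem i) hne with h | h
    · rw [hS1 l] at h; exact h
    · exfalso
      have hdd := hmono hlt
      have hl := hS1 l
      have hi := hS1 i
      omega
  intro i
  have hcomp : ∀ l ∈ Finset.Iic i, S 0 (g l) + I.p 0 (g l) ≤ S 1 (g i) := by
    intro l hl
    rw [Finset.mem_Iic] at hl
    rcases lt_or_eq_of_le hl with h | h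
    · have := hS01 l
      have := hS1 l
      have := claimA l i h
      omega
    · subst h; exact hS01 l
  have hsum : ∑ l ∈ Finset.Iic i, I.p 0 (g l) ≤ S 1 (g i) := by
    apply sum_len_le (Finset.Iic i) (fun l => S 0 (g l)) (fun l => I.p 0 (g l))
    · intro l _; exact I.p_pos 0 (g l)
    · intro a _ b _ hab
      exact h1 0 (g a) (hmem a) (g b) (hmem b) (fun h => absurd (hinj h) hab)
    · exact hcomp
  have hsum' : ∑ l ∈ Finset.Iic i, pp l ≤ S 1 (g i) := by
    rw [show ∑ l ∈ Finset.Iic i, pp l = ∑ l ∈ Finset.Iic i, I.p 0 (g l) from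
      Finset.sum_congr rfl (fun l _ => (hp l _ (hg l)).symm)]
    exact hsum
  have hD : (if i.val = 0 then 0
      else dd ⟨i.val - 1, lt_of_le_of_lt (Nat.sub_le _ _) i.isLt⟩) ≤ S 1 (g i) := by
    by_cases h0 : i.val = 0
    · rw [if_pos h0]; exact Nat.zero_le _
    · rw [if_neg h0]
      apply claimA
      rw [Fin.lt_def]
      simp
      omega
  rw [nomineeSet12, Finset.mem_filter]
  refine ⟨hg i, ?_⟩
  have := hS1 i
  omega

/-- per-type selection when jobs of a type share their due date
and first-machine processing time.  Given types `𝒥 0, …, 𝒥 (k'-1)` with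
strictly increasing due dates `dd` and common first-machine times `pp`:
(a) there is a feasible set consisting of exactly one job of each type iff
every nominee set `N(i)` is nonempty; and (b) in that case the maximum weight
of such a feasible set equals `∑ i, max {w a : a ∈ N(i)}`. -/
theorem jit_two_machines_type_selection_dp1 {J : Type} [DecidableEq J]
    {k' : ℕ} (I : JITInstance 2 J) (𝒥 : Fin k' → Finset J)
    (dd pp : Fin k' → ℕ) (hne : ∀ i, (𝒥 i).Nonempty)
    (hd : ∀ i, ∀ a ∈ 𝒥 i, I.d a = dd i)
    (hp : ∀ i, ∀ a ∈ 𝒥 i, I.p 0 a = pp i)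
    (hmono : StrictMono dd) :
    ((∃ g : Fin k' → J, (∀ i, g i ∈ 𝒥 i) ∧
        Feasible I (Finset.univ.image g)) ↔
      ∀ i, (nomineeSet12 I 𝒥 dd pp i).Nonempty) ∧
    ((∀ i, (nomineeSet12 I 𝒥 dd pp i).Nonempty) →
      IsGreatest
        {W : ℕ | ∃ g : Fin k' → J, (∀ i, g i ∈ 𝒥 i) ∧
          Feasible I (Finset.univ.image g) ∧
          W = ∑ a ∈ Finset.univ.image g, I.w a}
        (∑ i, (nomineeSet12 I 𝒥 dd pp i).sup I.w)) := by

  constructor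
  · constructor
    · rintro ⟨g, hg, hfeas⟩ i
      exact ⟨g i, nominee_of_feasible I 𝒥 dd pp hd hp hmono g hg hfeas i⟩
    · intro hN
      choose g hgN using hN
      exact ⟨g, fun i => Finset.mem_of_mem_filter _ (hgN i),
        feasible_forward I 𝒥 dd pp hd hp hmono g hgN⟩
  · intro hN
    constructor
    · have hex : ∀ i, ∃ a ∈ nomineeSet12 I 𝒥 dd pp i,
          (nomineeSet12 I 𝒥 dd pp i).sup I.w = I.w a := fun i =>
        Finset.exists_mem_eq_sup _ (hN i) I.w
      choose g hgN hgw using hex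
      have hgJ : ∀ i, g i ∈ 𝒥 i := fun i => Finset.mem_of_mem_filter _ (hgN i)
      have hinj := inj_of_types I 𝒥 dd hd hmono g hgJ
      refine ⟨g, hgJ, feasible_forward I 𝒥 dd pp hd hp hmono g hgN, ?_⟩
      rw [Finset.sum_image (fun x _ y _ h => hinj h)]
      exact Finset.sum_congr rfl (fun i _ => hgw i)
    · rintro W ⟨g, hg, hfeas, rfl⟩
      have hNmem := nominee_of_feasible I 𝒥 dd pp hd hp hmono g hg hfeas
      have hinj := inj_of_types I 𝒥 dd hd hmono g hg
      rw [Finset.sum_image (fun x _ y _ h => hinj h)]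
      exact Finset.sum_le_sum (fun i _ => Finset.le_sup (hNmem i))
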